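/- For any non-negative integer n and any x (as a polynomial identity or for all integers x), C(x,n)^2 = sum_{k=0}^{n} C(x, n+k) * C(n+k, k) * C(n, k). -/

import Mathlib

open Finset

/-- The generalized binomial coefficient `C(x, n) = x(x-1)⋯(x-n+1)/n!` as a rational number. -/
noncomputable def ratChoose (x : ℚ) (n : ℕ) : ℚ :=
  (∏ i ∈ Finset.range n, (x - i)) / (n.factorial : ℚ)

open Polynomial in
lemma prod_range_sub_eq_descPochhammer (x : ℚ) (n : ℕ) :
    (∏ i ∈ Finset.range n, (x - i)) = (descPochhammer ℚ n).eval x := by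
  induction n with
  | zero => simp
  | succ n ih => rw [Finset.prod_range_succ, ih, descPochhammer_succ_eval]

lemma ratChoose_natCast (m n : ℕ) : ratChoose (m : ℚ) n = (m.choose n : ℚ) := by
  rw [ratChoose, prod_range_sub_eq_descPochhammer, descPochhammer_eval_eq_descFactorial,
    Nat.descFactorial_eq_factorial_mul_choose]
  push_cast
  rw [mul_comm, mul_div_assoc, div_self (by exact_mod_cast n.factorial_ne_zero), mul_one]

/-- The identity for natural numbers. -/
lemma nat_ident (n m : ℕ) :
    (m.choose n) ^ 2 =
      ∑ k ∈ Finset.range (n + 1), m.choose (n + k) * (n + k).choose k * n.choose k := by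
  by_cases hmn : m < n
  · rw [Nat.choose_eq_zero_of_lt hmn]
    rw [Finset.sum_eq_zero]
    · ring
    intro k _
    rw [Nat.choose_eq_zero_of_lt (lt_of_lt_of_le hmn (Nat.le_add_right n k))]
    ring
  · push_neg at hmn
    have key : ∀ k, m.choose (n + k) * (n + k).choose k * n.choose k
        = m.choose n * ((m - n).choose k * n.choose k) := by
      intro k
      have hsym : (n + k).choose k = (n + k).choose n := by
        rw [Nat.choose_symm_add, Nat.add_comm, Nat.choose_symm_add]
      rw [hsym]
      by_cases h : n + k ≤ m
      · have := Nat.choose_mul (n := m) (Nat.le_add_right n k)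
        rw [this, Nat.add_sub_cancel_left]
        ring
      · push_neg at h
        rw [Nat.choose_eq_zero_of_lt h, Nat.choose_eq_zero_of_lt (by omega : m - n < k)]
        ring
    calc (m.choose n) ^ 2 = m.choose n * m.choose n := by ring
      _ = m.choose n * ∑ k ∈ Finset.range (n + 1), (m - n).choose k * n.choose k := by
          congr 1
          have hv := Nat.add_choose_eq (m - n) n n
          rw [Nat.sub_add_cancel hmn] at hv
          rw [hv, Finset.Nat.sum_antidiagonal_eq_sum_range_succ_mk]
          refine Finset.sum_congr rfl fun k hk => ?_
          have hk' : k ≤ n := Finset.mem_range_succ_iff.mp hk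
          rw [Nat.choose_symm hk']
      _ = ∑ k ∈ Finset.range (n + 1), m.choose (n + k) * (n + k).choose k * n.choose k := by
          rw [Finset.mul_sum]
          exact Finset.sum_congr rfl fun k _ => (key k).symm

open Polynomial in
theorem stmt_4 (n : ℕ) (x : ℚ) :
    (ratChoose x n) ^ 2 =
      ∑ k ∈ Finset.range (n + 1),
        ratChoose x (n + k) * ((n + k).choose k : ℚ) * (n.choose k : ℚ) := by
  set P : ℚ[X] := (C ((n.factorial : ℚ)⁻¹) * descPochhammer ℚ n) ^ 2 with hP
  set Q : ℚ[X] := ∑ k ∈ Finset.range (n + 1),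
      C (((n + k).factorial : ℚ)⁻¹ * ((n + k).choose k : ℚ) * (n.choose k : ℚ)) *
        descPochhammer ℚ (n + k) with hQ
  have evalP : ∀ y : ℚ, P.eval y = (ratChoose y n) ^ 2 := by
    intro y
    simp [hP, ratChoose, prod_range_sub_eq_descPochhammer, div_eq_inv_mul, mul_comm]
  have evalQ : ∀ y : ℚ, Q.eval y = ∑ k ∈ Finset.range (n + 1),
      ratChoose y (n + k) * ((n + k).choose k : ℚ) * (n.choose k : ℚ) := by
    intro y
    rw [hQ, Polynomial.eval_finset_sum]
    refine Finset.sum_congr rfl fun k _ => ?_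
    simp [ratChoose, prod_range_sub_eq_descPochhammer, div_eq_inv_mul]
    ring
  have hPQ : P = Q := by
    apply Polynomial.eq_of_infinite_eval_eq
    apply Set.infinite_of_injective_forall_mem (f := fun m : ℕ => (m : ℚ))
      (Nat.cast_injective)
    intro m
    simp only [Set.mem_setOf_eq]
    rw [evalP, evalQ]
    rw [ratChoose_natCast]
    rw [← Nat.cast_pow, nat_ident n m]
    push_cast
    exact Finset.sum_congr rfl fun k _ => by rw [ratChoose_natCast]
  rw [← evalP, ← evalQ, hPQ]
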